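/- For every finite configuration P ⊂ ℝ^d and every R > 0, the extremal densities satisfy m_{Q(0,R)}(P) / (1 + diam(P)/R)^d ≤ m_{ℝ^d}(P) ≤ m_{Q(0,R)}(P), where m_{ℝ^d}(P) is the supremum of upper densities of measurable subsets of ℝ^d containing no congruent copy of P, and m_{Q(0,R)}(P) is the supremum of vol(A)/R^d over measurable A ⊆ Q(0,R) containing no congruent copy of P. -/

import Mathlib

open MeasureTheory Filter

noncomputable section

/-- Borel σ-algebra on real matrices. -/
instance matMeasurableSpace {d : ℕ} : MeasurableSpace (Matrix (Fin d) (Fin d) ℝ) := borel _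

/-- The action of an orthogonal matrix on Euclidean space. -/
def act {d : ℕ} (T : Matrix.orthogonalGroup (Fin d) ℝ)
    (v : EuclideanSpace ℝ (Fin d)) : EuclideanSpace ℝ (Fin d) :=
  (EuclideanSpace.equiv (Fin d) ℝ).symm
    ((T : Matrix (Fin d) (Fin d) ℝ).mulVec (EuclideanSpace.equiv (Fin d) ℝ v))

/-- Open axis-parallel cube of side length `R` centered at `x`. -/
def cube {d : ℕ} (x : EuclideanSpace ℝ (Fin d)) (R : ℝ) : Set (EuclideanSpace ℝ (Fin d)) :=
  {y | ∀ j, |y j - x j| < R / 2}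

/-- `A` contains a congruent copy of the configuration `P`. -/
def hasCopy {d : ℕ} (A P : Set (EuclideanSpace ℝ (Fin d))) : Prop :=
  ∃ (x : EuclideanSpace ℝ (Fin d)) (T : Matrix.orthogonalGroup (Fin d) ℝ),
    (fun p => x + act T p) '' P ⊆ A

/-- The upper density of a set `A ⊆ ℝ^d`. -/
def upperDensity {d : ℕ} (A : Set (EuclideanSpace ℝ (Fin d))) : ℝ :=
  limsup (fun T : ℝ =>
    (volume (A ∩ {y : EuclideanSpace ℝ (Fin d) | ∀ j, |y j| ≤ T})).toReal / (2 * T) ^ d) atTop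

/-- Independence density of the configuration `P` in `ℝ^d`. -/
def mRd {d : ℕ} (P : Set (EuclideanSpace ℝ (Fin d))) : ℝ :=
  sSup (upperDensity '' {A | MeasurableSet A ∧ ¬ hasCopy A P})

/-- Independence density of `P` relative to the cube `Q(0,R)`. -/
def mQcube {d : ℕ} (R : ℝ) (P : Set (EuclideanSpace ℝ (Fin d))) : ℝ :=
  sSup ((fun A => (volume A).toReal / R ^ d) ''
    {A | A ⊆ cube 0 R ∧ MeasurableSet A ∧ ¬ hasCopy A P})

/-! ### Auxiliary lemmas -/

variable {d : ℕ}

/-- Closed cube. -/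
def Kube (x : EuclideanSpace ℝ (Fin d)) (R : ℝ) : Set (EuclideanSpace ℝ (Fin d)) :=
  {y | ∀ j, |y j - x j| ≤ R / 2}

lemma cube_subset_Kube (x : EuclideanSpace ℝ (Fin d)) (R : ℝ) : cube x R ⊆ Kube x R :=
  fun y hy j => (hy j).le

lemma measurable_eval' (j : Fin d) : Measurable (fun y : EuclideanSpace ℝ (Fin d) => y j) :=
  (measurable_pi_apply j).comp (WithLp.measurable_ofLp 2 _)

lemma cube_measurableSet (x : EuclideanSpace ℝ (Fin d)) (R : ℝ) : MeasurableSet (cube x R) := by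
  have : cube x R = ⋂ j, {y : EuclideanSpace ℝ (Fin d) | |y j - x j| < R / 2} := by
    ext y; simp [cube]
  rw [this]
  exact MeasurableSet.iInter fun j =>
    measurableSet_lt (((measurable_eval' j).sub measurable_const).abs) measurable_const

lemma Kube_measurableSet (x : EuclideanSpace ℝ (Fin d)) (R : ℝ) : MeasurableSet (Kube x R) := by
  have : Kube x R = ⋂ j, {y : EuclideanSpace ℝ (Fin d) | |y j - x j| ≤ R / 2} := by
    ext y; simp [Kube]
  rw [this]
  exact MeasurableSet.iInter fun j =>
    measurableSet_le (((measurable_eval' j).sub measurable_const).abs) measurable_const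

lemma volume_cube (x : EuclideanSpace ℝ (Fin d)) (R : ℝ) :
    volume (cube x R) = (ENNReal.ofReal R) ^ d := by
  have hmp := EuclideanSpace.volume_preserving_symm_measurableEquiv_toLp (Fin d)
  have h1 : cube x R = (MeasurableEquiv.toLp 2 (Fin d → ℝ)).symm ⁻¹'
      (Set.univ.pi fun j => Set.Ioo (x j - R/2) (x j + R/2)) := by
    ext y
    simp only [cube, Set.mem_preimage, Set.mem_pi, Set.mem_univ, Set.mem_Ioo, Set.mem_setOf_eq,
      abs_sub_lt_iff, forall_true_left, MeasurableEquiv.coe_toLp_symm]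
    constructor
    · intro h j; exact ⟨by linarith [(h j).2], by linarith [(h j).1]⟩
    · intro h j; exact ⟨by linarith [(h j).2], by linarith [(h j).1]⟩
  rw [h1, hmp.measure_preimage
    (MeasurableSet.univ_pi (fun j => measurableSet_Ioo)).nullMeasurableSet, volume_pi_pi]
  have : ∀ j : Fin d, volume (Set.Ioo (x j - R/2) (x j + R/2)) = ENNReal.ofReal R := by
    intro j; rw [Real.volume_Ioo]; congr 1; ring
  simp [this]

lemma volume_Kube (x : EuclideanSpace ℝ (Fin d)) (R : ℝ) :
    volume (Kube x R) = (ENNReal.ofReal R) ^ d := by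
  have hmp := EuclideanSpace.volume_preserving_symm_measurableEquiv_toLp (Fin d)
  have h1 : Kube x R = (MeasurableEquiv.toLp 2 (Fin d → ℝ)).symm ⁻¹'
      (Set.univ.pi fun j => Set.Icc (x j - R/2) (x j + R/2)) := by
    ext y
    simp only [Kube, Set.mem_preimage, Set.mem_pi, Set.mem_univ, Set.mem_Icc, Set.mem_setOf_eq,
      abs_sub_le_iff, forall_true_left, MeasurableEquiv.coe_toLp_symm]
    constructor
    · intro h j; exact ⟨by linarith [(h j).2], by linarith [(h j).1]⟩
    · intro h j; exact ⟨by linarith [(h j).2], by linarith [(h j).1]⟩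
  rw [h1, hmp.measure_preimage
    (MeasurableSet.univ_pi (fun j => measurableSet_Icc)).nullMeasurableSet, volume_pi_pi]
  have : ∀ j : Fin d, volume (Set.Icc (x j - R/2) (x j + R/2)) = ENNReal.ofReal R := by
    intro j; rw [Real.volume_Icc]; congr 1; ring
  simp [this]

lemma volume_Kube_diff_cube (x : EuclideanSpace ℝ (Fin d)) (R : ℝ) :
    volume (Kube x R \ cube x R) = 0 := by
  have h := measure_diff (cube_subset_Kube x R) (cube_measurableSet x R).nullMeasurableSet
    (by rw [volume_cube]; exact ENNReal.pow_ne_top ENNReal.ofReal_ne_top)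
  rw [h, volume_Kube, volume_cube, tsub_self]

lemma ST_eq (T : ℝ) :
    {y : EuclideanSpace ℝ (Fin d) | ∀ j, |y j| ≤ T} = Kube 0 (2 * T) := by
  ext y
  have h2 : 2 * T / 2 = T := by ring
  simp only [Set.mem_setOf_eq, Kube, h2]
  constructor
  · intro h j; simpa using h j
  · intro h j; simpa using h j

lemma act_sub (T : Matrix.orthogonalGroup (Fin d) ℝ) (v w : EuclideanSpace ℝ (Fin d)) :
    act T v - act T w = act T (v - w) := by
  simp [act, Matrix.mulVec_sub]

open Matrix in
lemma act_norm (T : Matrix.orthogonalGroup (Fin d) ℝ) (v : EuclideanSpace ℝ (Fin d)) :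
    ‖act T v‖ = ‖v‖ := by
  have hT : (T : Matrix (Fin d) (Fin d) ℝ)ᵀ * (T : Matrix (Fin d) (Fin d) ℝ) = 1 := by
    have h := T.2
    rw [Matrix.mem_orthogonalGroup_iff'] at h
    simpa [Matrix.star_eq_conjTranspose, Matrix.conjTranspose] using h
  have key : (inner ℝ (act T v) (act T v) : ℝ) = inner ℝ v v := by
    have h1 : (inner ℝ (act T v) (act T v) : ℝ) =
        ((T : Matrix (Fin d) (Fin d) ℝ).mulVec v) ⬝ᵥ ((T : Matrix (Fin d) (Fin d) ℝ).mulVec v) := by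
      rw [show act T v = WithLp.toLp 2
        ((T : Matrix (Fin d) (Fin d) ℝ).mulVec v) from rfl,
        EuclideanSpace.inner_toLp_toLp]
      simp [dotProduct]
    have h2 : (inner ℝ v v : ℝ) = (v : Fin d → ℝ) ⬝ᵥ (v : Fin d → ℝ) := by
      rw [EuclideanSpace.inner_eq_star_dotProduct]
      simp [dotProduct]
    rw [h1, h2, Matrix.dotProduct_mulVec, ← Matrix.mulVec_transpose, Matrix.mulVec_mulVec, hT,
      Matrix.one_mulVec]
  have := congrArg Real.sqrt key
  rwa [← norm_eq_sqrt_real_inner, ← norm_eq_sqrt_real_inner] at this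

lemma act_dist (T : Matrix.orthogonalGroup (Fin d) ℝ) (v w : EuclideanSpace ℝ (Fin d)) :
    dist (act T v) (act T w) = dist v w := by
  rw [dist_eq_norm, dist_eq_norm, act_sub, act_norm]

lemma coord_le_dist (y z : EuclideanSpace ℝ (Fin d)) (j : Fin d) :
    |y j - z j| ≤ dist y z := by
  rw [EuclideanSpace.dist_eq y z]
  have h1 : |y j - z j| = Real.sqrt (dist (y j) (z j) ^ 2) := by
    rw [Real.sqrt_sq_eq_abs, Real.dist_eq, abs_abs]
  rw [h1]
  apply Real.sqrt_le_sqrt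
  exact Finset.single_le_sum (f := fun i => dist (y i) (z i) ^ 2)
    (fun i _ => sq_nonneg _) (Finset.mem_univ j)

/-- The density function whose limsup is the upper density. -/
def dens (A : Set (EuclideanSpace ℝ (Fin d))) (T : ℝ) : ℝ :=
  (volume (A ∩ {y : EuclideanSpace ℝ (Fin d) | ∀ j, |y j| ≤ T})).toReal / (2 * T) ^ d

lemma upperDensity_eq (A : Set (EuclideanSpace ℝ (Fin d))) :
    upperDensity A = limsup (dens A) atTop := rfl

lemma dens_nonneg {A : Set (EuclideanSpace ℝ (Fin d))} {T : ℝ} (hT : 0 < T) :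
    0 ≤ dens A T := by
  apply div_nonneg ENNReal.toReal_nonneg
  positivity

lemma dens_le_one {A : Set (EuclideanSpace ℝ (Fin d))} {T : ℝ} (hT : 0 < T) :
    dens A T ≤ 1 := by
  rw [dens, div_le_one (by positivity)]
  have h1 : volume (A ∩ {y : EuclideanSpace ℝ (Fin d) | ∀ j, |y j| ≤ T}) ≤
      (ENNReal.ofReal (2 * T)) ^ d := by
    rw [← volume_Kube (0 : EuclideanSpace ℝ (Fin d)) (2 * T), ← ST_eq]
    exact measure_mono Set.inter_subset_right
  calc (volume (A ∩ {y : EuclideanSpace ℝ (Fin d) | ∀ j, |y j| ≤ T})).toReal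
      ≤ ((ENNReal.ofReal (2 * T)) ^ d).toReal :=
        ENNReal.toReal_mono (ENNReal.pow_ne_top ENNReal.ofReal_ne_top) h1
    _ = (2 * T) ^ d := by
        rw [ENNReal.toReal_pow, ENNReal.toReal_ofReal (by linarith)]

lemma upperDensity_nonneg (A : Set (EuclideanSpace ℝ (Fin d))) : 0 ≤ upperDensity A := by
  rw [upperDensity_eq]
  apply le_limsup_of_frequently_le
  · exact ((eventually_gt_atTop 0).mono fun T hT => dens_nonneg (A := A) hT).frequently
  · exact isBoundedUnder_of_eventually_le ((eventually_gt_atTop 0).mono fun T hT => dens_le_one hT)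

lemma upperDensity_le_one (A : Set (EuclideanSpace ℝ (Fin d))) : upperDensity A ≤ 1 := by
  rw [upperDensity_eq]
  apply limsup_le_of_le
  · exact isCoboundedUnder_le_of_eventually_le atTop
      ((eventually_gt_atTop 0).mono fun T hT => dens_nonneg hT)
  · exact (eventually_gt_atTop 0).mono fun T hT => dens_le_one hT

lemma mRd_bddAbove (P : Set (EuclideanSpace ℝ (Fin d))) :
    BddAbove (upperDensity '' {A | MeasurableSet A ∧ ¬ hasCopy A P}) := by
  refine ⟨1, ?_⟩
  rintro x ⟨A, _, rfl⟩
  exact upperDensity_le_one A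

lemma not_hasCopy_empty {P : Set (EuclideanSpace ℝ (Fin d))} (hPne : P.Nonempty) :
    ¬ hasCopy ∅ P := by
  rintro ⟨x, T, h⟩
  obtain ⟨p, hp⟩ := hPne
  exact h ⟨p, hp, rfl⟩

lemma hasCopy_mono {A B P : Set (EuclideanSpace ℝ (Fin d))} (h : A ⊆ B) :
    hasCopy A P → hasCopy B P := by
  rintro ⟨x, T, hx⟩
  exact ⟨x, T, hx.trans h⟩
lemma hasCopy_translate {A P : Set (EuclideanSpace ℝ (Fin d))} {x : EuclideanSpace ℝ (Fin d)}
    (h : hasCopy ((fun y => x + y) ⁻¹' A) P) : hasCopy A P := by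
  obtain ⟨y, T, hy⟩ := h
  refine ⟨x + y, T, ?_⟩
  rintro _ ⟨p, hp, rfl⟩
  have := hy ⟨p, hp, rfl⟩
  simpa [add_assoc] using this

lemma mQcube_mem_le_one {R : ℝ} (hR : 0 < R)
    {A : Set (EuclideanSpace ℝ (Fin d))} (hsub : A ⊆ cube 0 R) :
    (volume A).toReal / R ^ d ≤ 1 := by
  rw [div_le_one (by positivity)]
  calc (volume A).toReal ≤ (volume (cube (0 : EuclideanSpace ℝ (Fin d)) R)).toReal :=
        ENNReal.toReal_mono (by rw [volume_cube]; exact ENNReal.pow_ne_top ENNReal.ofReal_ne_top)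
          (measure_mono hsub)
    _ = R ^ d := by rw [volume_cube, ENNReal.toReal_pow, ENNReal.toReal_ofReal hR.le]

lemma mQcube_bddAbove {R : ℝ} (hR : 0 < R) (P : Set (EuclideanSpace ℝ (Fin d))) :
    BddAbove ((fun A => (volume A).toReal / R ^ d) ''
      {A | A ⊆ cube 0 R ∧ MeasurableSet A ∧ ¬ hasCopy A P}) := by
  refine ⟨1, ?_⟩
  rintro x ⟨A, ⟨hsub, _, _⟩, rfl⟩
  show (volume A).toReal / R ^ d ≤ 1
  exact mQcube_mem_le_one hR hsub

lemma mQcube_nonneg {R : ℝ} (hR : 0 < R) {P : Set (EuclideanSpace ℝ (Fin d))}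
    (hPne : P.Nonempty) : 0 ≤ mQcube R P := by
  have h0 : (0 : ℝ) = (fun A : Set (EuclideanSpace ℝ (Fin d)) => (volume A).toReal / R ^ d) ∅ := by
    simp
  rw [h0]
  exact le_csSup (mQcube_bddAbove hR P)
    ⟨∅, ⟨Set.empty_subset _, MeasurableSet.empty, not_hasCopy_empty hPne⟩, rfl⟩

lemma volume_inter_Kube_le {R : ℝ} (hR : 0 < R) {P A : Set (EuclideanSpace ℝ (Fin d))}
    (hPne : P.Nonempty) (hA : MeasurableSet A) (hnc : ¬ hasCopy A P)
    (x : EuclideanSpace ℝ (Fin d)) :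
    volume (A ∩ Kube x R) ≤ ENNReal.ofReal (mQcube R P * R ^ d) := by
  -- pass to open cube
  have h1 : volume (A ∩ Kube x R) ≤ volume (A ∩ cube x R) := by
    have hsub : A ∩ Kube x R ⊆ (A ∩ cube x R) ∪ (Kube x R \ cube x R) := by
      rintro y ⟨hyA, hyK⟩
      by_cases hc : y ∈ cube x R
      · exact Or.inl ⟨hyA, hc⟩
      · exact Or.inr ⟨hyK, hc⟩
    calc volume (A ∩ Kube x R) ≤ volume (A ∩ cube x R) + volume (Kube x R \ cube x R) :=
          le_trans (measure_mono hsub) (measure_union_le _ _)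
      _ = volume (A ∩ cube x R) := by rw [volume_Kube_diff_cube, add_zero]
  -- translate to cube centered at origin
  set A' : Set (EuclideanSpace ℝ (Fin d)) := (fun y => x + y) ⁻¹' A ∩ cube 0 R with hA'
  have hpre : (fun y => x + y) ⁻¹' (A ∩ cube x R) = A' := by
    rw [Set.preimage_inter, hA']
    congr 1
    ext y
    simp only [Set.mem_preimage, cube, Set.mem_setOf_eq]
    constructor
    · intro h j; have := h j; simpa using by simpa [PiLp.add_apply] using this
    · intro h j; have := h j; simp only [PiLp.add_apply, add_sub_cancel_left]; simpa using this
  have h2 : volume (A ∩ cube x R) = volume A' := by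
    rw [← hpre, measure_preimage_add]
  have hsub' : A' ⊆ cube 0 R := Set.inter_subset_right
  have hmeas' : MeasurableSet A' :=
    ((measurable_const_add x) hA).inter (cube_measurableSet 0 R)
  have hnc' : ¬ hasCopy A' P := fun h =>
    hnc (hasCopy_translate (hasCopy_mono Set.inter_subset_left h))
  have h3 : (volume A').toReal / R ^ d ≤ mQcube R P :=
    le_csSup (mQcube_bddAbove hR P) ⟨A', ⟨hsub', hmeas', hnc'⟩, rfl⟩
  have h4 : (volume A').toReal ≤ mQcube R P * R ^ d := by
    rw [div_le_iff₀ (by positivity)] at h3; linarith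
  have hfin : volume A' ≠ ⊤ := by
    refine ne_top_of_le_ne_top ?_ (measure_mono hsub')
    rw [volume_cube]; exact ENNReal.pow_ne_top ENNReal.ofReal_ne_top
  calc volume (A ∩ Kube x R) ≤ volume A' := h1.trans h2.le
    _ = ENNReal.ofReal (volume A').toReal := (ENNReal.ofReal_toReal hfin).symm
    _ ≤ ENNReal.ofReal (mQcube R P * R ^ d) := ENNReal.ofReal_le_ofReal h4
/-- Center of the `k`-th cell in the lattice of spacing `L`. -/
def ctr (L : ℝ) (k : Fin d → ℤ) : EuclideanSpace ℝ (Fin d) :=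
  (WithLp.equiv 2 (Fin d → ℝ)).symm (fun j => L * (k j : ℝ))

@[simp] lemma ctr_apply (L : ℝ) (k : Fin d → ℤ) (j : Fin d) : ctr L k j = L * (k j : ℝ) := rfl

lemma ST_subset_biUnion {R T : ℝ} (hR : 0 < R) (hT : 0 < T) :
    {y : EuclideanSpace ℝ (Fin d) | ∀ j, |y j| ≤ T} ⊆
    ⋃ k ∈ Fintype.piFinset (fun _ : Fin d => Finset.Icc (-(⌈T/R⌉₊ : ℤ)) (⌈T/R⌉₊ : ℤ)),
      Kube (ctr R k) R := by
  intro y hy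
  set N := ⌈T/R⌉₊ with hN
  have hk : ∀ j, |y j - R * round (y j / R)| ≤ R / 2 ∧ |round (y j / R)| ≤ (N : ℤ) := by
    intro j
    constructor
    · have h := abs_sub_round (y j / R)
      have he : |y j - R * round (y j / R)| = R * |y j / R - round (y j / R)| := by
        have hee : y j - R * round (y j / R) = R * (y j / R - round (y j / R)) := by
          field_simp
        rw [hee, abs_mul, abs_of_pos hR]
      rw [he]
      nlinarith [abs_nonneg (y j / R - (round (y j / R) : ℝ))]
    · have h := abs_sub_round (y j / R)
      have h2 : |(round (y j / R) : ℝ)| ≤ |y j / R| + 1/2 := by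
        calc |(round (y j / R) : ℝ)| = |y j / R - (y j / R - round (y j / R))| := by ring_nf
          _ ≤ |y j / R| + |y j / R - round (y j / R)| := abs_sub _ _
          _ ≤ |y j / R| + 1/2 := by linarith
      have h3 : |y j / R| ≤ T / R := by
        rw [abs_div, abs_of_pos hR]
        gcongr
        exact hy j
      have h4 : (|round (y j / R)| : ℝ) < (N : ℝ) + 1 := by
        push_cast
        have hle : T / R ≤ (N : ℝ) := by rw [hN]; exact_mod_cast Nat.le_ceil (T / R)
        linarith
      have h5 : |round (y j / R)| < (N : ℤ) + 1 := by exact_mod_cast h4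
      omega
  have h1 := fun j => (hk j).1
  have h2 := fun j => (hk j).2
  have hmem : (fun j => round (y j / R)) ∈
      Fintype.piFinset (fun _ : Fin d => Finset.Icc (-(N : ℤ)) (N : ℤ)) := by
    rw [Fintype.mem_piFinset]
    intro j
    rw [Finset.mem_Icc]
    exact ⟨neg_le_of_abs_le (h2 j), le_of_abs_le (h2 j)⟩
  have hsub : y ∈ Kube (ctr R (fun j => round (y j / R))) R := by
    intro j
    simpa using h1 j
  exact Set.mem_biUnion hmem hsub
lemma dens_le_bound {R : ℝ} (hR : 0 < R) {P A : Set (EuclideanSpace ℝ (Fin d))}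
    (hPne : P.Nonempty) (hA : MeasurableSet A) (hnc : ¬ hasCopy A P) {T : ℝ} (hT : 0 < T) :
    dens A T ≤ mQcube R P * (((2 * ⌈T/R⌉₊ + 1 : ℝ) * R) / (2 * T)) ^ d := by
  set N := ⌈T/R⌉₊ with hN
  set F := Fintype.piFinset (fun _ : Fin d => Finset.Icc (-(N : ℤ)) (N : ℤ)) with hF
  have hcardN : F.card = (2 * N + 1) ^ d := by
    rw [hF, Fintype.card_piFinset]
    have hIcc : (Finset.Icc (-(N : ℤ)) (N : ℤ)).card = 2 * N + 1 := by
      rw [Int.card_Icc]; omega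
    simp [hIcc]
  have hcard : (F.card : ℝ) = (2 * (N : ℝ) + 1) ^ d := by
    rw [hcardN]; push_cast; ring
  have hcount : volume (A ∩ {y : EuclideanSpace ℝ (Fin d) | ∀ j, |y j| ≤ T}) ≤
      (F.card : ENNReal) * ENNReal.ofReal (mQcube R P * R ^ d) := by
    have hsub : A ∩ {y : EuclideanSpace ℝ (Fin d) | ∀ j, |y j| ≤ T} ⊆
        ⋃ k ∈ F, (A ∩ Kube (ctr R k) R) := by
      intro y ⟨hyA, hyS⟩
      have h := ST_subset_biUnion hR hT hyS
      rw [Set.mem_iUnion₂] at h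
      obtain ⟨k, hk, hyK⟩ := h
      exact Set.mem_biUnion hk ⟨hyA, hyK⟩
    calc volume (A ∩ {y : EuclideanSpace ℝ (Fin d) | ∀ j, |y j| ≤ T})
        ≤ ∑ k ∈ F, volume (A ∩ Kube (ctr R k) R) :=
          (measure_mono hsub).trans (measure_biUnion_finset_le F _)
      _ ≤ ∑ _k ∈ F, ENNReal.ofReal (mQcube R P * R ^ d) :=
          Finset.sum_le_sum (fun k _ => volume_inter_Kube_le hR hPne hA hnc _)
      _ = (F.card : ENNReal) * ENNReal.ofReal (mQcube R P * R ^ d) := by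
          rw [Finset.sum_const, nsmul_eq_mul]
  have hmQ : 0 ≤ mQcube R P := mQcube_nonneg hR hPne
  have htoReal : (volume (A ∩ {y : EuclideanSpace ℝ (Fin d) | ∀ j, |y j| ≤ T})).toReal ≤
      (F.card : ℝ) * (mQcube R P * R ^ d) := by
    have hne : ((F.card : ENNReal) * ENNReal.ofReal (mQcube R P * R ^ d)) ≠ ⊤ :=
      ENNReal.mul_ne_top (ENNReal.natCast_ne_top _) ENNReal.ofReal_ne_top
    calc (volume _).toReal ≤ ((F.card : ENNReal) * ENNReal.ofReal (mQcube R P * R ^ d)).toReal :=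
          ENNReal.toReal_mono hne hcount
      _ = (F.card : ℝ) * (mQcube R P * R ^ d) := by
          rw [ENNReal.toReal_mul, ENNReal.toReal_ofReal (by positivity)]
          simp
  rw [dens, div_le_iff₀ (by positivity)]
  calc (volume (A ∩ {y : EuclideanSpace ℝ (Fin d) | ∀ j, |y j| ≤ T})).toReal
      ≤ (F.card : ℝ) * (mQcube R P * R ^ d) := htoReal
    _ = mQcube R P * (((2 * (N : ℝ) + 1) * R) / (2 * T)) ^ d * (2 * T) ^ d := by
        rw [hcard, div_pow, mul_pow]
        field_simp
lemma upperDensity_le_mQcube {R : ℝ} (hR : 0 < R) {P A : Set (EuclideanSpace ℝ (Fin d))}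
    (hPne : P.Nonempty) (hA : MeasurableSet A) (hnc : ¬ hasCopy A P) :
    upperDensity A ≤ mQcube R P := by
  have hmQ : 0 ≤ mQcube R P := mQcube_nonneg hR hPne
  have hev : ∀ᶠ T in atTop, dens A T ≤ mQcube R P * ((2*T + 3*R)/(2*T))^d := by
    filter_upwards [eventually_gt_atTop 0] with T hT
    refine (dens_le_bound hR hPne hA hnc hT).trans ?_
    have hceil : (⌈T/R⌉₊ : ℝ) < T/R + 1 := Nat.ceil_lt_add_one (le_of_lt (div_pos hT hR))
    have hnum : (2 * (⌈T/R⌉₊ : ℝ) + 1) * R ≤ 2*T + 3*R := by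
      have h2 : (⌈T/R⌉₊ : ℝ) * R < T + R := by
        have := mul_lt_mul_of_pos_right hceil hR
        calc (⌈T/R⌉₊ : ℝ) * R < (T/R + 1) * R := this
          _ = T + R := by field_simp
      nlinarith
    gcongr
  have h1 : Tendsto (fun T : ℝ => (2*T + 3*R)/(2*T)) atTop (nhds 1) := by
    have hEq : (fun T : ℝ => (2*T + 3*R)/(2*T)) =ᶠ[atTop] fun T => 1 + (3*R/2) * T⁻¹ := by
      filter_upwards [eventually_ne_atTop 0] with T hT
      field_simp
    rw [tendsto_congr' hEq]
    have h2 := tendsto_inv_atTop_zero.const_mul (3*R/2)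
    have := tendsto_const_nhds (α := ℝ) (x := (1:ℝ)) (f := atTop (α := ℝ)) |>.add h2
    simpa using this
  have htend : Tendsto (fun T : ℝ => mQcube R P * ((2*T + 3*R)/(2*T))^d) atTop
      (nhds (mQcube R P)) := by
    have h2 := (h1.pow d).const_mul (mQcube R P)
    simpa using h2
  rw [upperDensity_eq]
  calc limsup (dens A) atTop
      ≤ limsup (fun T => mQcube R P * ((2*T + 3*R)/(2*T))^d) atTop :=
        limsup_le_limsup hev
          (isCoboundedUnder_le_of_eventually_le atTop
            ((eventually_gt_atTop 0).mono fun T hT => dens_nonneg hT))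
          htend.isBoundedUnder_le
    _ = mQcube R P := htend.limsup_eq

lemma mRd_le_mQcube {R : ℝ} (hR : 0 < R) {P : Set (EuclideanSpace ℝ (Fin d))}
    (hPne : P.Nonempty) : mRd P ≤ mQcube R P := by
  apply csSup_le
  · exact ⟨upperDensity ∅, ⟨∅, ⟨MeasurableSet.empty, not_hasCopy_empty hPne⟩, rfl⟩⟩
  · rintro x ⟨A, ⟨hA, hnc⟩, rfl⟩
    exact upperDensity_le_mQcube hR hPne hA hnc
section Part1

variable {R : ℝ} {P A : Set (EuclideanSpace ℝ (Fin d))}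

/-- The periodic set built from `A`. -/
def perSet (L : ℝ) (A : Set (EuclideanSpace ℝ (Fin d))) : Set (EuclideanSpace ℝ (Fin d)) :=
  ⋃ k : Fin d → ℤ, (fun y => y - ctr L k) ⁻¹' A

lemma perSet_measurable (L : ℝ) (hA : MeasurableSet A) : MeasurableSet (perSet L A) :=
  MeasurableSet.iUnion fun k => (measurable_id.sub measurable_const) hA

lemma not_hasCopy_perSet (hR : 0 < R) (hPfin : P.Finite) (hPne : P.Nonempty)
    (hsub : A ⊆ cube 0 R) (hnc : ¬ hasCopy A P) :
    ¬ hasCopy (perSet (R + Metric.diam P) A) P := by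
  set δ := Metric.diam P with hδ
  have hδ0 : 0 ≤ δ := Metric.diam_nonneg
  set L := R + δ with hL
  rintro ⟨x, T, hcopy⟩
  obtain ⟨p₀, hp₀⟩ := hPne
  obtain ⟨k₀, hk₀⟩ := Set.mem_iUnion.1 (hcopy ⟨p₀, hp₀, rfl⟩)
  apply hnc
  refine ⟨x - ctr L k₀, T, ?_⟩
  rintro _ ⟨p, hp, rfl⟩
  obtain ⟨k, hk⟩ := Set.mem_iUnion.1 (hcopy ⟨p, hp, rfl⟩)
  have hkeq : k = k₀ := by
    by_contra hne
    obtain ⟨j, hj⟩ := Function.ne_iff.1 hne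
    have ha : |(x + act T p - ctr L k) j| < R / 2 := by
      have := hsub hk j
      simpa using this
    have ha₀ : |(x + act T p₀ - ctr L k₀) j| < R / 2 := by
      have := hsub hk₀ j
      simpa using this
    have hdist : dist (x + act T p) (x + act T p₀) ≤ δ := by
      rw [dist_add_left, act_dist]
      exact Metric.dist_le_diam_of_mem hPfin.isBounded hp hp₀
    have hcoord := coord_le_dist (x + act T p) (x + act T p₀) j
    -- coordinates
    have hc1 : (x + act T p - ctr L k) j = (x + act T p) j - L * (k j : ℝ) := by
      simp
    have hc0 : (x + act T p₀ - ctr L k₀) j = (x + act T p₀) j - L * (k₀ j : ℝ) := by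
      simp
    rw [hc1] at ha
    rw [hc0] at ha₀
    have hone : (1 : ℝ) ≤ |(k j : ℝ) - (k₀ j : ℝ)| := by
      have h1 : 1 ≤ |k j - k₀ j| := Int.one_le_abs (sub_ne_zero.2 hj)
      exact_mod_cast h1
    have hY : L ≤ |L * ((k j : ℝ) - (k₀ j : ℝ))| := by
      rw [abs_mul, abs_of_pos (by linarith : (0:ℝ) < L)]
      nlinarith
    have hXY : |L * ((k j : ℝ) - (k₀ j : ℝ))| ≤
        |(x + act T p) j - (x + act T p₀) j|
          + |(x + act T p) j - L * (k j : ℝ)| + |(x + act T p₀) j - L * (k₀ j : ℝ)| := by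
      have : L * ((k j : ℝ) - (k₀ j : ℝ)) =
          ((x + act T p₀) j - L * (k₀ j : ℝ)) - ((x + act T p) j - L * (k j : ℝ))
            + ((x + act T p) j - (x + act T p₀) j) := by ring
      rw [this]
      calc |_ + ((x + act T p) j - (x + act T p₀) j)|
          ≤ |((x + act T p₀) j - L * (k₀ j : ℝ)) - ((x + act T p) j - L * (k j : ℝ))|
            + |(x + act T p) j - (x + act T p₀) j| := abs_add_le _ _
        _ ≤ _ := by
            have := abs_sub ((x + act T p₀) j - L * (k₀ j : ℝ))
              ((x + act T p) j - L * (k j : ℝ))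
            linarith [this]
    linarith
  rw [hkeq] at hk
  have hmem : x + act T p - ctr L k₀ ∈ A := hk
  show x - ctr L k₀ + act T p ∈ A
  rwa [sub_add_eq_add_sub]

end Part1
section Part1b

variable {R L : ℝ} {P A : Set (EuclideanSpace ℝ (Fin d))}

lemma cell_volume (L : ℝ) (k : Fin d → ℤ) (A : Set (EuclideanSpace ℝ (Fin d))) :
    volume ((fun y => y - ctr L k) ⁻¹' A) = volume A := by
  have h : (fun y : EuclideanSpace ℝ (Fin d) => y - ctr L k) = fun y => y + (-ctr L k) := by
    funext y; rw [sub_eq_add_neg]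
  rw [h, measure_preimage_add_right]

lemma cells_disjoint (hR : 0 < R) (hRL : R ≤ L) (hsub : A ⊆ cube 0 R) (F : Finset (Fin d → ℤ)) :
    Set.PairwiseDisjoint (↑F) (fun k => (fun y => y - ctr L k) ⁻¹' A) := by
  intro k _ k' _ hne
  refine Set.disjoint_left.2 fun {y} hy hy' => ?_
  obtain ⟨j, hj⟩ := Function.ne_iff.1 hne
  have h1 : |y j - L * (k j : ℝ)| < R / 2 := by simpa using hsub hy j
  have h2 : |y j - L * (k' j : ℝ)| < R / 2 := by simpa using hsub hy' j
  have hone : (1 : ℝ) ≤ |(k j : ℝ) - (k' j : ℝ)| := by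
    have h3 : 1 ≤ |k j - k' j| := Int.one_le_abs (sub_ne_zero.2 hj)
    exact_mod_cast h3
  have hY : L ≤ |L * ((k j : ℝ) - (k' j : ℝ))| := by
    rw [abs_mul, abs_of_pos (lt_of_lt_of_le hR hRL)]
    nlinarith [lt_of_lt_of_le hR hRL]
  have hXY : |L * ((k j : ℝ) - (k' j : ℝ))| ≤
      |y j - L * (k' j : ℝ)| + |y j - L * (k j : ℝ)| := by
    have he : L * ((k j : ℝ) - (k' j : ℝ)) =
        (y j - L * (k' j : ℝ)) - (y j - L * (k j : ℝ)) := by ring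
    rw [he]
    exact abs_sub _ _
  linarith

lemma cell_subset_ST (hR : 0 < R) (hRL : R ≤ L) (hsub : A ⊆ cube 0 R) {M : ℕ} {T : ℝ}
    (hMT : ((M : ℝ) + 1) * L ≤ T) {k : Fin d → ℤ} (hk : ∀ j, |k j| ≤ (M : ℤ)) :
    (fun y => y - ctr L k) ⁻¹' A ⊆ {y : EuclideanSpace ℝ (Fin d) | ∀ j, |y j| ≤ T} := by
  intro y hy j
  have hL0 : 0 < L := lt_of_lt_of_le hR hRL
  have h1 : |y j - L * (k j : ℝ)| < R / 2 := by simpa using hsub hy j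
  have h2 : |L * (k j : ℝ)| ≤ L * (M : ℝ) := by
    rw [abs_mul, abs_of_pos hL0]
    have : |(k j : ℝ)| ≤ (M : ℝ) := by exact_mod_cast hk j
    nlinarith
  calc |y j| ≤ |y j - L * (k j : ℝ)| + |L * (k j : ℝ)| := by
        have he : y j = (y j - L * (k j : ℝ)) + L * (k j : ℝ) := by ring
        nth_rewrite 1 [he]
        exact abs_add_le _ _
    _ ≤ R / 2 + L * M := by linarith
    _ ≤ T := by nlinarith

lemma volume_perSet_ge (hR : 0 < R) (hRL : R ≤ L) (hsub : A ⊆ cube 0 R) (hA : MeasurableSet A)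
    {M : ℕ} {T : ℝ} (hMT : ((M : ℝ) + 1) * L ≤ T) :
    ((2 * M + 1 : ℕ) ^ d : ENNReal) * volume A ≤
      volume (perSet L A ∩ {y : EuclideanSpace ℝ (Fin d) | ∀ j, |y j| ≤ T}) := by
  set F := Fintype.piFinset (fun _ : Fin d => Finset.Icc (-(M : ℤ)) (M : ℤ)) with hF
  have hcardN : F.card = (2 * M + 1) ^ d := by
    rw [hF, Fintype.card_piFinset]
    have hIcc : (Finset.Icc (-(M : ℤ)) (M : ℤ)).card = 2 * M + 1 := by
      rw [Int.card_Icc]; omega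
    simp [hIcc]
  have hunionsub : (⋃ k ∈ F, (fun y => y - ctr L k) ⁻¹' A) ⊆
      perSet L A ∩ {y : EuclideanSpace ℝ (Fin d) | ∀ j, |y j| ≤ T} := by
    rw [Set.iUnion₂_subset_iff]
    intro k hk
    refine Set.subset_inter (Set.subset_iUnion_of_subset k subset_rfl) ?_
    refine cell_subset_ST hR hRL hsub hMT ?_
    rw [hF, Fintype.mem_piFinset] at hk
    intro j
    have hj := hk j
    rw [Finset.mem_Icc] at hj
    exact abs_le.2 hj
  have hmeas : ∀ k ∈ F, MeasurableSet ((fun y => y - ctr L k) ⁻¹' A) :=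
    fun k _ => (measurable_id.sub measurable_const) hA
  calc ((2 * M + 1 : ℕ) ^ d : ENNReal) * volume A
      = ∑ k ∈ F, volume ((fun y => y - ctr L k) ⁻¹' A) := by
        rw [Finset.sum_congr rfl (fun k _ => cell_volume L k A), Finset.sum_const, hcardN,
          nsmul_eq_mul]
        push_cast
        ring
    _ = volume (⋃ k ∈ F, (fun y => y - ctr L k) ⁻¹' A) :=
        (measure_biUnion_finset (cells_disjoint hR hRL hsub F) hmeas).symm
    _ ≤ _ := measure_mono hunionsub

end Part1b
section Part1c

variable {R L : ℝ} {P A : Set (EuclideanSpace ℝ (Fin d))}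

lemma dens_perSet_lower (hR : 0 < R) (hRL : R ≤ L) (hsub : A ⊆ cube 0 R) (hA : MeasurableSet A)
    {T : ℝ} (hT2 : 2 * L ≤ T) :
    (volume A).toReal / L ^ d * ((2 * T - 3 * L) / (2 * T)) ^ d ≤ dens (perSet L A) T := by
  have hL0 : 0 < L := lt_of_lt_of_le hR hRL
  have hT0 : 0 < T := lt_of_lt_of_le (by linarith) hT2
  have hTL2 : (2 : ℝ) ≤ T / L := (le_div_iff₀ hL0).2 (by linarith)
  have hfl2 : 2 ≤ ⌊T / L⌋₊ := Nat.le_floor (by exact_mod_cast hTL2)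
  set M : ℕ := ⌊T / L⌋₊ - 1 with hM
  have hMcast : (M : ℝ) = (⌊T / L⌋₊ : ℝ) - 1 := by
    rw [hM, Nat.cast_sub (by omega)]; norm_num
  have hfl_le : (⌊T / L⌋₊ : ℝ) ≤ T / L := Nat.floor_le (by positivity)
  have hfl_gt : T / L < (⌊T / L⌋₊ : ℝ) + 1 := Nat.lt_floor_add_one _
  have hMT : ((M : ℝ) + 1) * L ≤ T := by
    rw [hMcast]
    have : (⌊T / L⌋₊ : ℝ) * L ≤ T := by
      rw [← le_div_iff₀ hL0]; exact hfl_le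
    linarith
  have hlow : 2 * T - 3 * L ≤ (2 * (M : ℝ) + 1) * L := by
    rw [hMcast]
    have : T < ((⌊T / L⌋₊ : ℝ) + 1) * L := by
      rw [← div_lt_iff₀ hL0]; exact hfl_gt
    nlinarith
  have h2T3L : 0 ≤ 2 * T - 3 * L := by linarith
  have hvol := volume_perSet_ge (A := A) hR hRL hsub hA hMT
  have hfin : volume (perSet L A ∩ {y : EuclideanSpace ℝ (Fin d) | ∀ j, |y j| ≤ T}) ≠ ⊤ := by
    refine ne_top_of_le_ne_top ?_ (measure_mono Set.inter_subset_right)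
    rw [ST_eq, volume_Kube]
    exact ENNReal.pow_ne_top ENNReal.ofReal_ne_top
  have htoReal : (2 * (M : ℝ) + 1) ^ d * (volume A).toReal ≤
      (volume (perSet L A ∩ {y : EuclideanSpace ℝ (Fin d) | ∀ j, |y j| ≤ T})).toReal := by
    have h1 := ENNReal.toReal_mono hfin hvol
    rwa [ENNReal.toReal_mul, show (((2 * M + 1 : ℕ) : ENNReal) ^ d).toReal
      = (2 * (M : ℝ) + 1) ^ d by
        rw [ENNReal.toReal_pow, ENNReal.toReal_natCast]; push_cast; ring] at h1
  have key : (volume A).toReal / L ^ d * ((2 * T - 3 * L) / (2 * T)) ^ d ≤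
      (2 * (M : ℝ) + 1) ^ d * (volume A).toReal / (2 * T) ^ d := by
    have hpow : (2 * T - 3 * L) ^ d ≤ ((2 * (M : ℝ) + 1) * L) ^ d :=
      pow_le_pow_left₀ h2T3L hlow d
    have hvA : 0 ≤ (volume A).toReal := ENNReal.toReal_nonneg
    have e1 : (volume A).toReal / L ^ d * ((2 * T - 3 * L) / (2 * T)) ^ d =
        (volume A).toReal * (2 * T - 3 * L) ^ d / (L ^ d * (2 * T) ^ d) := by
      rw [div_pow]; ring
    have e2 : (2 * (M : ℝ) + 1) ^ d * (volume A).toReal / (2 * T) ^ d =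
        (volume A).toReal * ((2 * (M : ℝ) + 1) * L) ^ d / (L ^ d * (2 * T) ^ d) := by
      rw [mul_pow (2 * (M : ℝ) + 1) L d, div_eq_div_iff (by positivity : (0:ℝ) < (2*T)^d).ne'
        (by positivity : (0:ℝ) < L^d*(2*T)^d).ne']
      ring
    rw [e1, e2]
    gcongr
  have hfinal : (2 * (M : ℝ) + 1) ^ d * (volume A).toReal / (2 * T) ^ d ≤
      dens (perSet L A) T := by
    rw [dens]
    gcongr
  linarith [key, hfinal]

end Part1c
section Part1d

variable {R L : ℝ} {P A : Set (EuclideanSpace ℝ (Fin d))}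

lemma le_upperDensity_perSet (hR : 0 < R) (hRL : R ≤ L) (hsub : A ⊆ cube 0 R)
    (hA : MeasurableSet A) :
    (volume A).toReal / L ^ d ≤ upperDensity (perSet L A) := by
  have hL0 : 0 < L := lt_of_lt_of_le hR hRL
  have hev : ∀ᶠ T in atTop,
      (volume A).toReal / L ^ d * ((2 * T - 3 * L) / (2 * T)) ^ d ≤ dens (perSet L A) T := by
    filter_upwards [eventually_ge_atTop (2 * L)] with T hT
    exact dens_perSet_lower hR hRL hsub hA hT
  have h1 : Tendsto (fun T : ℝ => (2 * T - 3 * L) / (2 * T)) atTop (nhds 1) := by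
    have hEq : (fun T : ℝ => (2 * T - 3 * L) / (2 * T)) =ᶠ[atTop]
        fun T => 1 + (-(3 * L) / 2) * T⁻¹ := by
      filter_upwards [eventually_ne_atTop 0] with T hT
      field_simp
      ring
    rw [tendsto_congr' hEq]
    have h2 := tendsto_inv_atTop_zero.const_mul (-(3 * L) / 2)
    have h3 := tendsto_const_nhds (α := ℝ) (x := (1:ℝ)) (f := atTop (α := ℝ)) |>.add h2
    simpa using h3
  have htend : Tendsto (fun T : ℝ => (volume A).toReal / L ^ d * ((2 * T - 3 * L) / (2 * T)) ^ d)
      atTop (nhds ((volume A).toReal / L ^ d)) := by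
    have h2 := (h1.pow d).const_mul ((volume A).toReal / L ^ d)
    simpa using h2
  have hcob : IsCoboundedUnder (· ≥ ·) atTop (dens (perSet L A)) :=
    isCoboundedUnder_ge_of_eventually_le atTop
      ((eventually_gt_atTop 0).mono fun T hT => dens_le_one hT)
  calc (volume A).toReal / L ^ d
      = liminf (fun T : ℝ => (volume A).toReal / L ^ d * ((2 * T - 3 * L) / (2 * T)) ^ d)
          atTop := htend.liminf_eq.symm
    _ ≤ liminf (dens (perSet L A)) atTop := liminf_le_liminf hev htend.isBoundedUnder_ge hcob
    _ ≤ limsup (dens (perSet L A)) atTop :=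
        liminf_le_limsup
          (isBoundedUnder_of_eventually_le ((eventually_gt_atTop 0).mono
            fun T hT => dens_le_one hT))
          (isBoundedUnder_of_eventually_ge ((eventually_gt_atTop 0).mono
            fun T hT => dens_nonneg hT))
    _ = upperDensity (perSet L A) := (upperDensity_eq _).symm

lemma div_Ld_le_mRd (hR : 0 < R) (hPfin : P.Finite) (hPne : P.Nonempty)
    (hsub : A ⊆ cube 0 R) (hA : MeasurableSet A) (hnc : ¬ hasCopy A P) :
    (volume A).toReal / (R + Metric.diam P) ^ d ≤ mRd P := by
  have hδ0 : 0 ≤ Metric.diam P := Metric.diam_nonneg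
  have hRL : R ≤ R + Metric.diam P := by linarith
  refine le_trans (le_upperDensity_perSet hR hRL hsub hA) ?_
  exact le_csSup (mRd_bddAbove P)
    ⟨perSet (R + Metric.diam P) A,
      ⟨perSet_measurable _ hA, not_hasCopy_perSet hR hPfin hPne hsub hnc⟩, rfl⟩

end Part1d

/-- comparison between the whole-space and cube independence densities. -/
theorem stmt_2 {d : ℕ} (hd : 0 < d) (P : Set (EuclideanSpace ℝ (Fin d)))
    (hPfin : P.Finite) (hPne : P.Nonempty) (R : ℝ) (hR : 0 < R) :
    mQcube R P / (1 + Metric.diam P / R) ^ d ≤ mRd P ∧ mRd P ≤ mQcube R P := by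
  constructor
  · have hδ0 : 0 ≤ Metric.diam P := Metric.diam_nonneg
    have hfac : 0 < (1 + Metric.diam P / R) ^ d := by positivity
    rw [div_le_iff₀ hfac]
    apply csSup_le
    · exact ⟨(fun A => (volume A).toReal / R ^ d) ∅,
        ⟨∅, ⟨Set.empty_subset _, MeasurableSet.empty, not_hasCopy_empty hPne⟩, rfl⟩⟩
    · rintro x ⟨A, ⟨hsub, hA, hnc⟩, rfl⟩
      show (volume A).toReal / R ^ d ≤ mRd P * (1 + Metric.diam P / R) ^ d
      have hL : (R + Metric.diam P) = R * (1 + Metric.diam P / R) := by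
        field_simp
      have hkey := div_Ld_le_mRd hR hPfin hPne hsub hA hnc
      have he : (volume A).toReal / R ^ d =
          (volume A).toReal / (R + Metric.diam P) ^ d * (1 + Metric.diam P / R) ^ d := by
        rw [hL, mul_pow]
        have h1 : (0:ℝ) < (1 + Metric.diam P / R) ^ d := by positivity
        field_simp
      rw [he]
      have h1 : (0:ℝ) ≤ (1 + Metric.diam P / R) ^ d := by positivity
      exact mul_le_mul_of_nonneg_right hkey h1
  · exact mRd_le_mQcube hR hPne
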